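/- Let X be a nonempty set and F : X → X any map. In the space B(X) of bounded real-valued functions on X with the supremum norm, the distance from the constant function 1 to the set of coboundaries {φ∘F − φ : φ ∈ B(X)} equals 1; that is, inf over bounded φ : X → ℝ of sup_{x ∈ X} |1 − (φ(F x) − φ(x))| = 1. -/
import Mathlib


lemma coboundary_sup_ge_one {X : Type*} [Nonempty X] (F : X → X) (φ : X → ℝ)
    (C : ℝ) (hC : ∀ x, |φ x| ≤ C) : 1 ≤ ⨆ x : X, |1 - (φ (F x) - φ x)| := by
  set s : ℝ := ⨆ x : X, |1 - (φ (F x) - φ x)| with hs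
  by_contra h
  push_neg at h
  have hbdd : BddAbove (Set.range fun x : X => |1 - (φ (F x) - φ x)|) := by
    refine ⟨1 + 2 * C, ?_⟩
    rintro _ ⟨x, rfl⟩
    have h1 := hC x
    have h2 := hC (F x)
    have := abs_sub_abs_le_abs_sub (1 : ℝ) (φ (F x) - φ x)
    calc |1 - (φ (F x) - φ x)| ≤ |(1:ℝ)| + |φ (F x) - φ x| := abs_sub _ _
      _ ≤ 1 + (|φ (F x)| + |φ x|) := by
          gcongr
          · simp
          · exact abs_sub _ _
      _ ≤ 1 + 2 * C := by linarith
  have key : ∀ x, 1 - s ≤ φ (F x) - φ x := by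
    intro x
    have hle : |1 - (φ (F x) - φ x)| ≤ s := le_ciSup hbdd x
    have := le_of_abs_le hle
    linarith
  have step : ∀ n : ℕ, ∀ x, φ x + n * (1 - s) ≤ φ (F^[n] x) := by
    intro n
    induction n with
    | zero => intro x; simp
    | succ n ih =>
      intro x
      have h1 := ih (F x)
      have h2 := key x
      rw [Function.iterate_succ_apply]
      push_cast
      linarith
  obtain ⟨x0⟩ := ‹Nonempty X›
  have hpos : 0 < 1 - s := by linarith
  obtain ⟨n, hn⟩ := exists_nat_gt ((2 * C) / (1 - s))
  have hn' : 2 * C < n * (1 - s) := by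
    rw [div_lt_iff₀ hpos] at hn
    linarith
  have h1 := step n x0
  have h2 := hC x0
  have h3 := hC (F^[n] x0)
  have h4 : -C ≤ φ x0 := (abs_le.mp h2).1
  have h5 : φ (F^[n] x0) ≤ C := (abs_le.mp h3).2
  linarith

/-- For any nonempty set `X` and any map `F : X → X`, in the space of
bounded real-valued functions on `X` with the sup norm, the distance from the
constant function `1` to the set of coboundaries `{φ ∘ F − φ : φ bounded}` equals `1`. -/
theorem dist_one_to_coboundaries {X : Type*} [Nonempty X] (F : X → X) :
    sInf {d : ℝ | ∃ φ : X → ℝ, (∃ C : ℝ, ∀ x, |φ x| ≤ C) ∧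
      d = ⨆ x : X, |1 - (φ (F x) - φ x)|} = 1 := by
  have hmem : (1 : ℝ) ∈ {d : ℝ | ∃ φ : X → ℝ, (∃ C : ℝ, ∀ x, |φ x| ≤ C) ∧
      d = ⨆ x : X, |1 - (φ (F x) - φ x)|} := by
    refine ⟨fun _ => 0, ⟨0, fun x => by simp⟩, ?_⟩
    simp [ciSup_const]
  apply le_antisymm
  · apply csInf_le
    · refine ⟨1, ?_⟩
      rintro d ⟨φ, ⟨C, hC⟩, rfl⟩
      exact coboundary_sup_ge_one F φ C hC
    · exact hmem
  · apply le_csInf ⟨1, hmem⟩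
    rintro d ⟨φ, ⟨C, hC⟩, rfl⟩
    exact coboundary_sup_ge_one F φ C hC
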